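/- For each integer k ≥ 0 there exists a constant C_k, depending only on k and on the moments of the common distribution p, such that for every even N ≥ 2 the average (2k+1)-st spectral moment satisfies |N^{−((2k+1)/2+1)} · E[trace(A_N^{2k+1})]| ≤ C_k · N^{−1/2}. -/

import Mathlib

open MeasureTheory ProbabilityTheory Filter Finset Matrix

noncomputable section

/-- Diagonal label of the entry `(i,j)` of an `N × N` real symmetric palindromic
Toeplitz matrix: `min (|i-j|, N-1-|i-j|)`. -/
def palLabel (N : ℕ) (i j : Fin N) : ℕ :=
  min (max i.val j.val - min i.val j.val) (N - 1 - (max i.val j.val - min i.val j.val))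

/-- The `N × N` real symmetric palindromic Toeplitz matrix built from `b 0, b 1, ...`. -/
def palToep (N : ℕ) (b : ℕ → ℝ) : Matrix (Fin N) (Fin N) ℝ :=
  Matrix.of fun i j => b (palLabel N i j)

/-! ### Auxiliary lemmas -/

lemma pow_apply_paths {N : ℕ} (A : Matrix (Fin N) (Fin N) ℝ) :
    ∀ (M : ℕ) (x y : Fin N),
      (A ^ (M + 1)) x y = ∑ g : Fin M → Fin N,
        (∏ j : Fin M, A ((Fin.cons x g : Fin (M+1) → Fin N) j.castSucc) (g j)) * A ((Fin.cons x g : Fin (M+1) → Fin N) (Fin.last M)) y := by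
  intro M
  induction M with
  | zero =>
      intro x y
      simp [pow_succ, pow_zero]
  | succ M ih =>
      intro x y
      have h1 : A ^ (M + 2) = A * A ^ (M + 1) := pow_succ' A (M + 1)
      rw [h1, Matrix.mul_apply]
      simp_rw [ih]
      rw [← Equiv.sum_comp (Fin.consEquiv (fun _ : Fin (M + 1) => Fin N))]
      rw [Fintype.sum_prod_type]
      congr 1
      ext z
      rw [Finset.mul_sum]
      congr 1
      ext g
      have hcons : (Fin.consEquiv (fun _ : Fin (M + 1) => Fin N)) (z, g) = Fin.cons z g := rfl
      rw [hcons]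
      set w : Fin (M + 1) → Fin N := Fin.cons z g with hw
      set v : Fin (M + 2) → Fin N := Fin.cons x w with hv
      rw [Fin.prod_univ_succ]
      have e0 : v ((0 : Fin (M + 1)).castSucc) = x := by
        rw [hv]; simp
      have e1 : ∀ j : Fin M, v (j.succ.castSucc) = w j.castSucc := by
        intro j
        rw [hv, ← Fin.succ_castSucc, Fin.cons_succ]
      have e2 : v (Fin.last (M + 1)) = w (Fin.last M) := by
        have h : Fin.last (M + 1) = (Fin.last M).succ := rfl
        rw [hv, h, Fin.cons_succ]
      have e3 : ∀ j : Fin M, w j.succ = g j := fun j => by rw [hw, Fin.cons_succ]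
      have e4 : w (0 : Fin (M + 1)) = z := by rw [hw]; simp
      simp only [e0, e1, e2, e3, e4]
      ring

lemma trace_pow_paths {N : ℕ} (A : Matrix (Fin N) (Fin N) ℝ) (M : ℕ) :
    (A ^ (M + 1)).trace = ∑ f : Fin (M + 1) → Fin N, ∏ j : Fin (M + 1), A (f j) (f (j + 1)) := by
  rw [Matrix.trace]
  simp only [Matrix.diag]
  simp_rw [pow_apply_paths A M]
  rw [← Equiv.sum_comp (Fin.consEquiv (fun _ : Fin (M + 1) => Fin N)), Fintype.sum_prod_type]
  congr 1; ext x; congr 1; ext g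
  have hcons : (Fin.consEquiv (fun _ : Fin (M + 1) => Fin N)) (x, g) = Fin.cons x g := rfl
  rw [hcons, Fin.prod_univ_castSucc]
  congr 1
  · apply Finset.prod_congr rfl
    intro j _
    congr 1
    rw [Fin.coeSucc_eq_succ, Fin.cons_succ]
  · congr 1
    rw [Fin.last_add_one, Fin.cons_zero]

def stepVal (N x l : ℕ) (c : Bool × Bool) : ℕ :=
  if c.1 then (if c.2 then x + l else x + (N - 1 - l))
  else (if c.2 then x - l else x - (N - 1 - l))

def stepCode (x y l : ℕ) : Bool × Bool :=
  (decide (x ≤ y), if x ≤ y then decide (y - x = l) else decide (x - y = l))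

lemma palLabel_lt {N : ℕ} (x y : Fin N) : palLabel N x y < N := by
  have hx := x.isLt; have hy := y.isLt
  unfold palLabel; omega

lemma step_recover {N : ℕ} (x y : Fin N) :
    y.val = stepVal N x.val (palLabel N x y) (stepCode x.val y.val (palLabel N x y)) := by
  have hx := x.isLt; have hy := y.isLt
  unfold stepVal stepCode palLabel
  split_ifs <;> simp_all <;> omega

def labN (N : ℕ) {m : ℕ} (f : Fin (m + 1) → Fin N) (j : Fin (m + 1)) : ℕ :=
  palLabel N (f j) (f (j + 1))

lemma path_determined {N m : ℕ} (f f' : Fin (m + 1) → Fin N)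
    (h0 : f 0 = f' 0)
    (hl : ∀ j, labN N f j = labN N f' j)
    (hc : ∀ j, stepCode (f j).val (f (j + 1)).val (labN N f j)
      = stepCode (f' j).val (f' (j + 1)).val (labN N f' j)) : f = f' := by
  have key : ∀ t : ℕ, ∀ ht : t < m + 1, f ⟨t, ht⟩ = f' ⟨t, ht⟩ := by
    intro t
    induction t with
    | zero => intro ht; exact h0
    | succ t ih =>
        intro ht
        have ht' : t < m + 1 := Nat.lt_of_succ_lt ht
        set j : Fin (m + 1) := ⟨t, ht'⟩ with hj
        have hj1 : j + 1 = ⟨t + 1, ht⟩ := by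
          apply Fin.ext
          simp [hj, Fin.add_def, Nat.mod_eq_of_lt ht]
        have hv : (f (j + 1)).val = (f' (j + 1)).val := by
          rw [step_recover (f j) (f (j + 1)), step_recover (f' j) (f' (j + 1))]
          have hfj : f j = f' j := ih ht'
          have hlj := hl j
          have hcj := hc j
          unfold labN at hlj hcj
          rw [hcj, hlj, hfj]
        rw [← hj1]
        exact Fin.val_injective hv
  funext j
  have := key j.val j.isLt
  simpa using this

lemma card_paths_le (N k : ℕ) :
    ((Finset.univ : Finset (Fin (2 * k + 1) → Fin N)).filter
      (fun f => ∀ a ∈ Finset.image (labN N (m := 2 * k) f) Finset.univ,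
        2 ≤ (Finset.univ.filter (fun j => labN N (m := 2 * k) f j = a)).card)).card
      ≤ N ^ (k + 1) * (k ^ (2 * k + 1) * 4 ^ (2 * k + 1)) := by
  classical
  rcases Nat.eq_zero_or_pos N with hN | hN
  · subst hN
    have : (Finset.univ : Finset (Fin (2 * k + 1) → Fin 0)) = ∅ := by
      ext f; exact absurd (f 0).isLt (by omega)
    simp [this]
  set m' := 2 * k + 1 with hm'
  set S := ((Finset.univ : Finset (Fin (2 * k + 1) → Fin N)).filter
      (fun f => ∀ a ∈ Finset.image (labN N (m := 2 * k) f) Finset.univ,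
        2 ≤ (Finset.univ.filter (fun j => labN N (m := 2 * k) f j = a)).card)) with hS
  set L := (Finset.univ : Finset (Fin m' → Fin N)).filter
      (fun ℓ => (Finset.image ℓ Finset.univ).card ≤ k) with hL
  set Φ : (Fin m' → Fin N) → Fin N × (Fin m' → Fin N) × (Fin m' → Bool × Bool) :=
    fun f => (f 0,
      fun j => ⟨labN N (m := 2 * k) f j, palLabel_lt _ _⟩,
      fun j => stepCode (f j).val (f (j + 1)).val (labN N (m := 2 * k) f j)) with hΦ
  have hcardS : S.card ≤
      ((Finset.univ : Finset (Fin N)) ×ˢ (L ×ˢ (Finset.univ : Finset (Fin m' → Bool × Bool)))).card := by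
    apply Finset.card_le_card_of_injOn Φ
    · intro f hf
      rw [Finset.mem_coe, hS, Finset.mem_filter] at hf
      obtain ⟨-, hf⟩ := hf
      rw [Finset.mem_coe, Finset.mem_product, Finset.mem_product]
      refine ⟨Finset.mem_univ _, ?_, Finset.mem_univ _⟩
      rw [hL, Finset.mem_filter]
      refine ⟨Finset.mem_univ _, ?_⟩
      have himg : (Finset.image (fun j => (⟨labN N (m := 2 * k) f j, palLabel_lt _ _⟩ : Fin N))
          Finset.univ).card = (Finset.image (labN N (m := 2 * k) f) Finset.univ).card := by
        rw [← Finset.card_image_of_injective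
          (Finset.image (fun j => (⟨labN N (m := 2 * k) f j, palLabel_lt _ _⟩ : Fin N)) Finset.univ)
          Fin.val_injective, Finset.image_image]
        rfl
      rw [himg]
      have hsum : (Finset.univ : Finset (Fin m')).card =
          ∑ a ∈ Finset.image (labN N (m := 2 * k) f) Finset.univ,
            (Finset.univ.filter (fun j => labN N (m := 2 * k) f j = a)).card :=
        Finset.card_eq_sum_card_fiberwise
          (fun j _ => Finset.mem_image_of_mem _ (Finset.mem_univ j))
      have hle : ∑ _a ∈ Finset.image (labN N (m := 2 * k) f) Finset.univ, 2 ≤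
          ∑ a ∈ Finset.image (labN N (m := 2 * k) f) Finset.univ,
            (Finset.univ.filter (fun j => labN N (m := 2 * k) f j = a)).card :=
        Finset.sum_le_sum hf
      have hconst : ∑ _a ∈ Finset.image (labN N (m := 2 * k) f) Finset.univ, 2 =
          (Finset.image (labN N (m := 2 * k) f) Finset.univ).card * 2 := by
        rw [Finset.sum_const, smul_eq_mul]
      have hcu : (Finset.univ : Finset (Fin m')).card = m' := by simp
      omega
    · intro f hf f' hf' heq
      rw [hΦ] at heq
      simp only [Prod.mk.injEq] at heq
      obtain ⟨h0, hl, hc⟩ := heq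
      apply path_determined f f' h0
      · intro j
        have := congrFun hl j
        exact congrArg Fin.val this
      · intro j
        exact congrFun hc j
  have hne : (Finset.univ : Finset (Fin m')).Nonempty := Finset.univ_nonempty
  have hcardL : L.card ≤ k ^ m' * N ^ k := by
    have hsurj : Set.SurjOn (fun p : (Fin m' → Fin k) × (Fin k → Fin N) => p.2 ∘ p.1)
        ((Finset.univ : Finset ((Fin m' → Fin k) × (Fin k → Fin N))) : Set _) (L : Set _) := by
      intro ℓ hℓ
      rw [Finset.mem_coe, hL, Finset.mem_filter] at hℓ
      obtain ⟨-, hcard⟩ := hℓ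
      set T' := Finset.image ℓ Finset.univ with hT'
      have hneT : T'.Nonempty := hne.image ℓ
      have htpos : 0 < T'.card := Finset.card_pos.mpr hneT
      set e := T'.orderIsoOfFin rfl with he
      have hmem : ∀ j, ℓ j ∈ T' := fun j => Finset.mem_image_of_mem _ (Finset.mem_univ j)
      refine ⟨(fun j => ⟨(e.symm ⟨ℓ j, hmem j⟩).val,
          lt_of_lt_of_le (e.symm ⟨ℓ j, hmem j⟩).isLt hcard⟩,
        fun i => if h : i.val < T'.card then (e ⟨i.val, h⟩ : Fin N) else (⟨0, hN⟩ : Fin N)),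
        Finset.mem_coe.mpr (Finset.mem_univ _), ?_⟩
      funext j
      simp only [Function.comp_apply]
      rw [dif_pos ((e.symm ⟨ℓ j, hmem j⟩).isLt)]
      have : (⟨(e.symm ⟨ℓ j, hmem j⟩).val, (e.symm ⟨ℓ j, hmem j⟩).isLt⟩ : Fin T'.card)
          = e.symm ⟨ℓ j, hmem j⟩ := Fin.eta _ _
      rw [this, OrderIso.apply_symm_apply]
    calc L.card ≤ (Finset.univ : Finset ((Fin m' → Fin k) × (Fin k → Fin N))).card :=
          Finset.card_le_card_of_surjOn _ hsurj
      _ = k ^ m' * N ^ k := by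
          simp [Fintype.card_fun]
  have hcardT : ((Finset.univ : Finset (Fin N)) ×ˢ
      (L ×ˢ (Finset.univ : Finset (Fin m' → Bool × Bool)))).card
      = N * (L.card * 4 ^ m') := by
    rw [Finset.card_product, Finset.card_product]
    congr 1
    · simp
    · congr 1
      rw [Finset.card_univ, Fintype.card_fun]
      simp
  calc S.card ≤ _ := hcardS
    _ = N * (L.card * 4 ^ m') := hcardT
    _ ≤ N * ((k ^ m' * N ^ k) * 4 ^ m') := by
        apply Nat.mul_le_mul_left
        exact Nat.mul_le_mul_right _ hcardL
    _ = N ^ (k + 1) * (k ^ m' * 4 ^ m') := by ring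
    _ = N ^ (k + 1) * (k ^ (2 * k + 1) * 4 ^ (2 * k + 1)) := by rw [hm']

lemma indep_integral_prod {Ω : Type} [MeasureSpace Ω]
    (hprob : IsProbabilityMeasure (volume : Measure Ω))
    {X : ℕ → Ω → ℝ}
    (hindep : iIndepFun X volume)
    (hmeas : ∀ i, Measurable (X i)) :
    ∀ (s : Finset ℕ), (∀ i ∈ s, Integrable (X i)) →
      Integrable (fun ω => ∏ i ∈ s, X i ω) ∧
        (∫ ω, ∏ i ∈ s, X i ω) = ∏ i ∈ s, ∫ ω, X i ω := by
  intro s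
  induction s using Finset.induction_on with
  | empty =>
      intro _
      simp
  | @insert a s ha ih =>
      intro hint
      have hint' : ∀ i ∈ s, Integrable (X i) := fun i hi => hint i (Finset.mem_insert_of_mem hi)
      obtain ⟨ihInt, ihEq⟩ := ih hint'
      have hXa : Integrable (X a) := hint a (Finset.mem_insert_self a s)
      have hIndepPair : IndepFun (∏ j ∈ s, X j) (X a) volume :=
        hindep.indepFun_finsetProd_of_notMem hmeas ha
      have hps : (∏ j ∈ s, X j) = fun ω => ∏ j ∈ s, X j ω := by
        ext ω; exact Finset.prod_apply ω s X
      have hIndepPair' : IndepFun (fun ω => ∏ j ∈ s, X j ω) (X a) volume := by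
        rwa [hps] at hIndepPair
      constructor
      · have h := hIndepPair'.symm.integrable_mul hXa ihInt
        have : (fun ω => ∏ i ∈ insert a s, X i ω) = X a * fun ω => ∏ j ∈ s, X j ω := by
          ext ω; rw [Finset.prod_insert ha]; rfl
        rwa [this]
      · have h := hIndepPair'.integral_fun_mul_eq_mul_integral ihInt.1 hXa.1
        calc (∫ ω, ∏ i ∈ insert a s, X i ω)
            = ∫ ω, (∏ j ∈ s, X j ω) * X a ω := by
              congr 1; ext ω; rw [Finset.prod_insert ha]; ring
          _ = (∫ ω, ∏ j ∈ s, X j ω) * ∫ ω, X a ω := h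
          _ = ∏ i ∈ insert a s, ∫ ω, X i ω := by
              rw [Finset.prod_insert ha, ihEq]; ring

lemma term_eval {Ω : Type} [MeasureSpace Ω]
    (hprob : IsProbabilityMeasure (volume : Measure Ω))
    (b : ℕ → Ω → ℝ)
    (hmeas : ∀ i, Measurable (b i))
    (hindep : iIndepFun b volume)
    (hident : ∀ i, IdentDistrib (b i) (b 0) volume volume)
    (hmom : ∀ c : ℕ, Integrable (fun ω => (b 0 ω) ^ c))
    {m' : ℕ} (ℓ : Fin m' → ℕ) :
    Integrable (fun ω => ∏ j : Fin m', b (ℓ j) ω) ∧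
      (∫ ω, ∏ j : Fin m', b (ℓ j) ω) =
        ∏ a ∈ Finset.image ℓ Finset.univ,
          ∫ ω, b 0 ω ^ (Finset.univ.filter (fun j => ℓ j = a)).card := by
  classical
  set c : ℕ → ℕ := fun a => (Finset.univ.filter (fun j => ℓ j = a)).card with hc
  have h1 : ∀ ω, ∏ j : Fin m', b (ℓ j) ω = ∏ a ∈ Finset.image ℓ Finset.univ, b a ω ^ c a := by
    intro ω
    rw [← Finset.prod_fiberwise_of_maps_to
      (fun j _ => Finset.mem_image_of_mem ℓ (Finset.mem_univ j)) (fun j => b (ℓ j) ω)]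
    apply Finset.prod_congr rfl
    intro a _
    rw [Finset.prod_congr rfl (fun j hj => by rw [(Finset.mem_filter.mp hj).2] :
        ∀ j ∈ Finset.univ.filter (fun j => ℓ j = a), b (ℓ j) ω = b a ω),
      Finset.prod_const]
  set X : ℕ → Ω → ℝ := fun a ω => b a ω ^ c a with hX
  have hXindep : iIndepFun X volume := by
    have := hindep.comp (fun a (x : ℝ) => x ^ c a) (fun a => measurable_id.pow_const (c a))
    exact this
  have hXmeas : ∀ a, Measurable (X a) := fun a => (hmeas a).pow_const (c a)
  have hXident : ∀ a, IdentDistrib (X a) (fun ω => b 0 ω ^ c a) volume volume := by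
    intro a
    exact (hident a).comp (measurable_id.pow_const (c a))
  have hXint : ∀ a, Integrable (X a) := fun a => (hXident a).integrable_iff.mpr (hmom (c a))
  obtain ⟨hInt, hEq⟩ := indep_integral_prod hprob hXindep hXmeas (Finset.image ℓ Finset.univ)
    (fun a _ => hXint a)
  constructor
  · have : (fun ω => ∏ j : Fin m', b (ℓ j) ω) = fun ω => ∏ a ∈ Finset.image ℓ Finset.univ, X a ω := by
      funext ω; exact h1 ω
    rw [this]; exact hInt
  · calc (∫ ω, ∏ j : Fin m', b (ℓ j) ω)
        = ∫ ω, ∏ a ∈ Finset.image ℓ Finset.univ, X a ω := by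
          congr 1; funext ω; exact h1 ω
      _ = ∏ a ∈ Finset.image ℓ Finset.univ, ∫ ω, X a ω := hEq
      _ = ∏ a ∈ Finset.image ℓ Finset.univ, ∫ ω, b 0 ω ^ c a := by
          apply Finset.prod_congr rfl
          intro a _
          exact (hXident a).integral_eq

/-- Quantitative vanishing of odd moments: for each `k` there is a constant `C_k`
(depending only on `k` and the moments of the entry distribution) such that for every
even `N ≥ 2`, `|N^{-((2k+1)/2+1)} E[trace (A_N^{2k+1})]| ≤ C_k N^{-1/2}`. -/
theorem palindromicToeplitz_odd_moments_bound
    {Ω : Type} [MeasureSpace Ω]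
    (hprob : IsProbabilityMeasure (volume : Measure Ω))
    (b : ℕ → Ω → ℝ)
    (hmeas : ∀ i, Measurable (b i))
    (hindep : iIndepFun b volume)
    (hident : ∀ i, IdentDistrib (b i) (b 0) volume volume)
    (hmean : ∫ ω, b 0 ω = 0)
    (hvar : ∫ ω, (b 0 ω) ^ 2 = 1)
    (hmom : ∀ k : ℕ, Integrable (fun ω => (b 0 ω) ^ k))
    (k : ℕ) :
    ∃ C : ℝ, ∀ n : ℕ,
      |(1 / ((2 * n + 2 : ℕ) : ℝ) ^ ((2 * (k : ℝ) + 1) / 2 + 1)) *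
          ∫ ω, (palToep (2 * n + 2) (fun m => b m ω) ^ (2 * k + 1)).trace|
        ≤ C * ((2 * n + 2 : ℕ) : ℝ) ^ (-(1 / 2) : ℝ) := by
  classical
  set M : ℝ := 1 + ∑ c ∈ Finset.range (2 * k + 2), |∫ ω, b 0 ω ^ c| with hM
  have hsum_nonneg : (0:ℝ) ≤ ∑ c ∈ Finset.range (2 * k + 2), |∫ ω, b 0 ω ^ c| :=
    Finset.sum_nonneg fun _ _ => abs_nonneg _
  have hM1 : (1:ℝ) ≤ M := by rw [hM]; linarith
  have hM0 : (0:ℝ) ≤ M := by linarith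
  have hMc : ∀ c ≤ 2 * k + 1, |∫ ω, b 0 ω ^ c| ≤ M := by
    intro c hc
    have hmem : c ∈ Finset.range (2 * k + 2) := Finset.mem_range.mpr (by omega)
    have := Finset.single_le_sum (f := fun c => |∫ ω, b 0 ω ^ c|)
      (fun _ _ => abs_nonneg _) hmem
    rw [hM]; linarith
  refine ⟨((k ^ (2 * k + 1) * 4 ^ (2 * k + 1) : ℕ) : ℝ) * M ^ (2 * k + 1), ?_⟩
  intro n
  set N := 2 * n + 2 with hNdef
  have hNpos : 0 < N := by omega
  -- trace expansion
  have htr : ∀ ω : Ω, (palToep N (fun m => b m ω) ^ (2 * k + 1)).trace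
      = ∑ f : Fin (2 * k + 1) → Fin N, ∏ j : Fin (2 * k + 1), b (labN N (m := 2 * k) f j) ω := by
    intro ω
    rw [trace_pow_paths (palToep N (fun m => b m ω)) (2 * k)]
    rfl
  have hterm := fun f : Fin (2 * k + 1) → Fin N =>
    term_eval hprob b hmeas hindep hident hmom (labN N (m := 2 * k) f)
  -- swap integral and sum
  have hswap : (∫ ω, (palToep N (fun m => b m ω) ^ (2 * k + 1)).trace)
      = ∑ f : Fin (2 * k + 1) → Fin N, ∫ ω, ∏ j : Fin (2 * k + 1), b (labN N (m := 2 * k) f j) ω := by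
    calc (∫ ω, (palToep N (fun m => b m ω) ^ (2 * k + 1)).trace)
        = ∫ ω, ∑ f : Fin (2 * k + 1) → Fin N,
            ∏ j : Fin (2 * k + 1), b (labN N (m := 2 * k) f j) ω := by
          congr 1; funext ω; exact htr ω
      _ = ∑ f : Fin (2 * k + 1) → Fin N, ∫ ω, ∏ j : Fin (2 * k + 1), b (labN N (m := 2 * k) f j) ω :=
          integral_finset_sum _ (fun f _ => (hterm f).1)
  set T : (Fin (2 * k + 1) → Fin N) → ℝ :=
    fun f => ∫ ω, ∏ j : Fin (2 * k + 1), b (labN N (m := 2 * k) f j) ω with hT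
  set S := ((Finset.univ : Finset (Fin (2 * k + 1) → Fin N)).filter
      (fun f => ∀ a ∈ Finset.image (labN N (m := 2 * k) f) Finset.univ,
        2 ≤ (Finset.univ.filter (fun j => labN N (m := 2 * k) f j = a)).card)) with hS
  -- terms outside S vanish
  have hvanish : ∀ f ∈ (Finset.univ : Finset (Fin (2 * k + 1) → Fin N)), f ∉ S → T f = 0 := by
    intro f _ hfS
    rw [hS, Finset.mem_filter] at hfS
    push_neg at hfS
    obtain ⟨a, ha, hcard⟩ := hfS (Finset.mem_univ f)
    have hpos : 0 < (Finset.univ.filter (fun j => labN N (m := 2 * k) f j = a)).card := by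
      obtain ⟨j, _, hj⟩ := Finset.mem_image.mp ha
      exact Finset.card_pos.mpr ⟨j, Finset.mem_filter.mpr ⟨Finset.mem_univ j, hj⟩⟩
    have hone : (Finset.univ.filter (fun j => labN N (m := 2 * k) f j = a)).card = 1 := by omega
    show (∫ ω, ∏ j : Fin (2 * k + 1), b (labN N (m := 2 * k) f j) ω) = 0
    rw [(hterm f).2]
    apply Finset.prod_eq_zero ha
    rw [hone]
    simpa using hmean
  have hsumS : (∑ f : Fin (2 * k + 1) → Fin N, T f) = ∑ f ∈ S, T f :=
    (Finset.sum_subset (Finset.filter_subset _ _) hvanish).symm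
  -- bound each term in S
  have hbound : ∀ f ∈ S, |T f| ≤ M ^ (2 * k + 1) := by
    intro f _
    show |∫ ω, ∏ j : Fin (2 * k + 1), b (labN N (m := 2 * k) f j) ω| ≤ M ^ (2 * k + 1)
    rw [(hterm f).2, Finset.abs_prod]
    calc (∏ a ∈ Finset.image (labN N (m := 2 * k) f) Finset.univ,
            |∫ ω, b 0 ω ^ (Finset.univ.filter (fun j => labN N (m := 2 * k) f j = a)).card|)
        ≤ ∏ _a ∈ Finset.image (labN N (m := 2 * k) f) Finset.univ, M := by
          apply Finset.prod_le_prod (fun _ _ => abs_nonneg _)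
          intro a _
          apply hMc
          calc (Finset.univ.filter (fun j => labN N (m := 2 * k) f j = a)).card
              ≤ (Finset.univ : Finset (Fin (2 * k + 1))).card := Finset.card_filter_le _ _
            _ = 2 * k + 1 := by simp
      _ = M ^ (Finset.image (labN N (m := 2 * k) f) Finset.univ).card := Finset.prod_const M
      _ ≤ M ^ (2 * k + 1) := by
          apply pow_le_pow_right₀ hM1
          calc (Finset.image (labN N (m := 2 * k) f) Finset.univ).card
              ≤ (Finset.univ : Finset (Fin (2 * k + 1))).card := Finset.card_image_le
            _ = 2 * k + 1 := by simp
  -- integral bound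
  have hIbound : |∫ ω, (palToep N (fun m => b m ω) ^ (2 * k + 1)).trace|
      ≤ ((N ^ (k + 1) * (k ^ (2 * k + 1) * 4 ^ (2 * k + 1)) : ℕ) : ℝ) * M ^ (2 * k + 1) := by
    rw [hswap, hsumS]
    calc |∑ f ∈ S, T f| ≤ ∑ f ∈ S, |T f| := Finset.abs_sum_le_sum_abs _ _
      _ ≤ S.card • M ^ (2 * k + 1) := Finset.sum_le_card_nsmul _ _ _ hbound
      _ = (S.card : ℝ) * M ^ (2 * k + 1) := nsmul_eq_mul _ _
      _ ≤ ((N ^ (k + 1) * (k ^ (2 * k + 1) * 4 ^ (2 * k + 1)) : ℕ) : ℝ) * M ^ (2 * k + 1) := by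
          apply mul_le_mul_of_nonneg_right _ (pow_nonneg hM0 _)
          exact_mod_cast Nat.cast_le.mpr (card_paths_le N k)
  -- final real computation
  set x : ℝ := ((N : ℕ) : ℝ) with hx
  have hxpos : (0:ℝ) < x := by
    rw [hx]; exact_mod_cast hNpos
  have hxp : (0:ℝ) < x ^ ((2 * (k : ℝ) + 1) / 2 + 1) := Real.rpow_pos_of_pos hxpos _
  have hcast : ((N ^ (k + 1) * (k ^ (2 * k + 1) * 4 ^ (2 * k + 1)) : ℕ) : ℝ)
      = x ^ (k + 1) * ((k ^ (2 * k + 1) * 4 ^ (2 * k + 1) : ℕ) : ℝ) := by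
    rw [hx]; push_cast; ring
  have hpow : x ^ (k + 1) / x ^ ((2 * (k : ℝ) + 1) / 2 + 1) = x ^ (-(1 / 2) : ℝ) := by
    rw [← Real.rpow_natCast x (k + 1), ← Real.rpow_sub hxpos]
    congr 1
    push_cast
    ring
  rw [abs_mul, abs_of_pos (by positivity : (0:ℝ) < 1 / x ^ ((2 * (k : ℝ) + 1) / 2 + 1))]
  calc (1 / x ^ ((2 * (k : ℝ) + 1) / 2 + 1)) *
        |∫ ω, (palToep N (fun m => b m ω) ^ (2 * k + 1)).trace|
      ≤ (1 / x ^ ((2 * (k : ℝ) + 1) / 2 + 1)) *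
          (((N ^ (k + 1) * (k ^ (2 * k + 1) * 4 ^ (2 * k + 1)) : ℕ) : ℝ) * M ^ (2 * k + 1)) :=
        mul_le_mul_of_nonneg_left hIbound (by positivity)
    _ = (((k ^ (2 * k + 1) * 4 ^ (2 * k + 1) : ℕ) : ℝ) * M ^ (2 * k + 1)) *
          (x ^ (k + 1) / x ^ ((2 * (k : ℝ) + 1) / 2 + 1)) := by
        rw [hcast]; ring
    _ = (((k ^ (2 * k + 1) * 4 ^ (2 * k + 1) : ℕ) : ℝ) * M ^ (2 * k + 1)) *
          x ^ (-(1 / 2) : ℝ) := by rw [hpow]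

end
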